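/- Fix 𝒜 ⊆ ℕ and a finite set 𝓗 = {h₁,…,h_k} of integers with a partition 𝓗 = B₁ ∪ … ∪ B_M. Let μᵢ, tᵢ ≥ 1 be real numbers for 1 ≤ i ≤ M, let ρ_𝒜 be a non-negative function on the integers supported on 𝒜 (i.e. ρ_𝒜(n) = 0 whenever n ∉ 𝒜), and let w(n) ≥ 0 be non-negative weights. If Σ_{N ≤ n < 2N} [ min_{1≤j≤M} (μ_j²/t_j²) − Σ_{i=1}^{M} ( (Σ_{h ∈ Bᵢ} ρ_𝒜(n+h) − μᵢ) / tᵢ )² ] · w(n) > 0, then there exists n ∈ [N, 2N) and, for each 1 ≤ i ≤ M, an element h_{a_i} ∈ Bᵢ such that n + h_{a_i} ∈ 𝒜. -/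

import Mathlib

open Finset

/-- second moment estimate. -/
theorem stmt3 (A : Set ℕ) (M : ℕ) (hM : 1 ≤ M) (B : ℕ → Finset ℤ)
    (hdisj : ∀ i j, 1 ≤ i → i ≤ M → 1 ≤ j → j ≤ M → i ≠ j → Disjoint (B i) (B j))
    (μ t : ℕ → ℝ)
    (hμ : ∀ i, 1 ≤ i → i ≤ M → 1 ≤ μ i) (ht : ∀ i, 1 ≤ i → i ≤ M → 1 ≤ t i)
    (ρ : ℤ → ℝ) (hρ0 : ∀ x, 0 ≤ ρ x)
    (hsupp : ∀ x : ℤ, ρ x ≠ 0 → ∃ m ∈ A, (m : ℤ) = x)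
    (w : ℕ → ℝ) (hw : ∀ n, 0 ≤ w n) (N : ℕ)
    (hpos : 0 < ∑ n ∈ Finset.Ico N (2 * N),
      (((Finset.Icc 1 M).inf' (Finset.nonempty_Icc.2 hM)
          fun j => μ j ^ 2 / t j ^ 2) -
        ∑ i ∈ Finset.Icc 1 M,
          (((∑ h ∈ B i, ρ ((n : ℤ) + h)) - μ i) / t i) ^ 2) * w n) :
    ∃ n ∈ Finset.Ico N (2 * N), ∀ i, 1 ≤ i → i ≤ M →
      ∃ x ∈ B i, ∃ m ∈ A, (m : ℤ) = (n : ℤ) + x := by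
  obtain ⟨n, hn, hn0⟩ : ∃ n ∈ Finset.Ico N (2 * N), 0 <
      (((Finset.Icc 1 M).inf' (Finset.nonempty_Icc.2 hM)
          fun j => μ j ^ 2 / t j ^ 2) -
        ∑ i ∈ Finset.Icc 1 M,
          (((∑ h ∈ B i, ρ ((n : ℤ) + h)) - μ i) / t i) ^ 2) * w n := by
    by_contra h
    push_neg at h
    exact absurd hpos (not_lt.2 (Finset.sum_nonpos h))
  set c := (Finset.Icc 1 M).inf' (Finset.nonempty_Icc.2 hM)
      fun j => μ j ^ 2 / t j ^ 2 with hc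
  set S := ∑ i ∈ Finset.Icc 1 M,
      (((∑ h ∈ B i, ρ ((n : ℤ) + h)) - μ i) / t i) ^ 2 with hS
  have hlt : S < c := by nlinarith [hw n]
  refine ⟨n, hn, ?_⟩
  intro i h1 hiM
  by_contra hcon
  push_neg at hcon
  have hz : ∀ x ∈ B i, ρ ((n : ℤ) + x) = 0 := by
    intro x hx
    by_contra hne
    obtain ⟨m, hm, hmx⟩ := hsupp _ hne
    exact hcon x hx m hm hmx
  have hsum0 : (∑ h ∈ B i, ρ ((n : ℤ) + h)) = 0 := Finset.sum_eq_zero hz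
  have hmem : i ∈ Finset.Icc 1 M := Finset.mem_Icc.2 ⟨h1, hiM⟩
  have hle : (((∑ h ∈ B i, ρ ((n : ℤ) + h)) - μ i) / t i) ^ 2 ≤ S :=
    Finset.single_le_sum
      (f := fun j => (((∑ h ∈ B j, ρ ((n : ℤ) + h)) - μ j) / t j) ^ 2)
      (fun j _ => sq_nonneg _) hmem
  have heq : (((∑ h ∈ B i, ρ ((n : ℤ) + h)) - μ i) / t i) ^ 2
      = μ i ^ 2 / t i ^ 2 := by
    rw [hsum0, div_pow]
    ring_nf
  have hcle : c ≤ μ i ^ 2 / t i ^ 2 :=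
    Finset.inf'_le (fun j => μ j ^ 2 / t j ^ 2) hmem
  rw [heq] at hle
  linarith
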